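/- Let S be a nonempty finite type, let O be a type, let T : ℕ, and let g : ℕ → S → O be a sequence of labelings (g t i is the outcome obtained by element i at recursion level t). For t ≤ T and i ∈ S, define the level-t equivalence class C_t(i) = {j : S | ∀ τ < t, g τ j = g τ i} (as a Finset of S). Assume the splitting property: for every t < T and every i ∈ S, if C_t(i) has at least 2 elements then there exists j ∈ C_t(i) with g t j ≠ g t i (i.e. g t is non-constant on every non-singleton class). If the cardinality of S is at most 2^T, then there exists i ∈ S whose level-T class is a singleton: C_T(i) = {i}. -/
import Mathlib


/-- If a nonempty set `S` of at most `2^T` elements is recursively refined `T` times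
into equivalence classes `C t i = {j | ∀ τ < t, g τ j = g τ i}`, and at each level every
class of size at least `2` is split (the labeling `g t` is non-constant on it), then
after `T` levels some class is a singleton. -/
theorem stmt8 {S O : Type*} [Fintype S] [Nonempty S] (T : ℕ) (g : ℕ → S → O)
    (C : ℕ → S → Finset S)
    (hC : ∀ t, t ≤ T → ∀ i j : S, j ∈ C t i ↔ ∀ τ < t, g τ j = g τ i)
    (hsplit : ∀ t < T, ∀ i : S, 2 ≤ (C t i).card → ∃ j ∈ C t i, g t j ≠ g t i)
    (hcard : Fintype.card S ≤ 2 ^ T) :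
    ∃ i : S, C T i = {i} := by
  classical
  have hmem : ∀ t, t ≤ T → ∀ i : S, i ∈ C t i := by
    intro t ht i
    exact (hC t ht i i).2 (fun τ _ => rfl)
  have key : ∀ t, t ≤ T → ∃ i : S, (C t i).card ≤ 2 ^ (T - t) := by
    intro t
    induction t with
    | zero =>
      intro _
      obtain ⟨i⟩ := ‹Nonempty S›
      refine ⟨i, ?_⟩
      simpa using (Finset.card_le_univ (C 0 i)).trans hcard
    | succ t ih =>
      intro ht
      have ht' : t ≤ T := Nat.le_of_succ_le ht
      have htT : t < T := ht
      obtain ⟨i, hi⟩ := ih ht'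
      by_cases h2 : 2 ≤ (C t i).card
      · obtain ⟨j, hj, hne⟩ := hsplit t htT i h2
        have subi : C (t + 1) i ⊆ C t i := by
          intro k hk
          exact (hC t ht' i k).2 fun τ hτ =>
            (hC (t + 1) ht i k).1 hk τ (Nat.lt_succ_of_lt hτ)
        have subj : C (t + 1) j ⊆ C t i := by
          intro k hk
          refine (hC t ht' i k).2 fun τ hτ => ?_
          have h1 := (hC (t + 1) ht j k).1 hk τ (Nat.lt_succ_of_lt hτ)
          have h2' := (hC t ht' i j).1 hj τ hτ
          exact h1.trans h2'
        have hdisj : Disjoint (C (t + 1) i) (C (t + 1) j) := by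
          rw [Finset.disjoint_left]
          intro k hki hkj
          have e1 := (hC (t + 1) ht i k).1 hki t (Nat.lt_succ_self t)
          have e2 := (hC (t + 1) ht j k).1 hkj t (Nat.lt_succ_self t)
          exact hne (e2.symm.trans e1)
        have hsum : (C (t + 1) i).card + (C (t + 1) j).card ≤ (C t i).card := by
          rw [← Finset.card_union_of_disjoint hdisj]
          exact Finset.card_le_card (Finset.union_subset subi subj)
        have hpow : 2 ^ (T - t) = 2 ^ (T - (t + 1)) + 2 ^ (T - (t + 1)) := by
          have : T - t = (T - (t + 1)) + 1 := by omega
          rw [this, pow_succ]; ring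
        have hmin : (C (t + 1) i).card ≤ 2 ^ (T - (t + 1)) ∨
            (C (t + 1) j).card ≤ 2 ^ (T - (t + 1)) := by
          by_contra h
          push_neg at h
          omega
        rcases hmin with h | h
        · exact ⟨i, h⟩
        · exact ⟨j, h⟩
      · refine ⟨i, ?_⟩
        have subi : C (t + 1) i ⊆ C t i := by
          intro k hk
          exact (hC t ht' i k).2 fun τ hτ =>
            (hC (t + 1) ht i k).1 hk τ (Nat.lt_succ_of_lt hτ)
        have := Finset.card_le_card subi
        have hp : 1 ≤ 2 ^ (T - (t + 1)) := Nat.one_le_two_pow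
        omega
  obtain ⟨i, hi⟩ := key T le_rfl
  have h1 : (C T i).card = 1 := by
    have hpos : 0 < (C T i).card := Finset.card_pos.2 ⟨i, hmem T le_rfl i⟩
    simp only [Nat.sub_self, pow_zero] at hi
    omega
  obtain ⟨a, ha⟩ := Finset.card_eq_one.1 h1
  have : i ∈ ({a} : Finset S) := ha ▸ hmem T le_rfl i
  rw [Finset.mem_singleton] at this
  exact ⟨i, by rw [ha, this]⟩
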